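/- Along any solution of the Sp(2)-invariant soliton system, the quantity M := 3x + τ̃₁ satisfies M' = ((y² + x²/2)/(xy²))·M − 3x²/y², and consequently d/dt (M/(xy²)) = −3x/y⁴; in particular M/(xy²) is strictly decreasing. -/

import Mathlib

/-- The Sp(2)-invariant soliton first-order ODE system for `(x, y, τ₂)`
with dilation constant `lam`, on a set `I`. -/
def sp2System (lam : ℝ) (x y τ : ℝ → ℝ) (I : Set ℝ) : Prop :=
  ∀ t ∈ I,
    HasDerivAt (fun s => x s ^ 2)
      (2 * x t - x t ^ 2 / y t ^ 2 * (x t + 2 * τ t)) t ∧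
    HasDerivAt (fun s => y s ^ 2) (x t + τ t) t ∧
    HasDerivAt τ
      (4 * (lam * x t * y t ^ 2 - 3 * τ t) *
          (y t ^ 2 - x t ^ 2 - 3 / 2 * x t * τ t) /
        (3 * x t * (x t ^ 2 + 2 * y t ^ 2))) t

/-- Adjusted torsion `τ̃₁ = 2x²(λxy² − 3τ₂)/(x² + 2y²)`. -/
noncomputable def tt1V (lam x y τ : ℝ) : ℝ :=
  2 * x ^ 2 * (lam * x * y ^ 2 - 3 * τ) / (x ^ 2 + 2 * y ^ 2)

/-- `M := 3x + τ̃₁`. -/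
noncomputable def MV (lam x y τ : ℝ) : ℝ := 3 * x + tt1V lam x y τ

section aux

variable (lam : ℝ) (x y τ : ℝ → ℝ) (I : Set ℝ)

lemma aux_key (hIo : IsOpen I)
    (hx : ∀ t ∈ I, 0 < x t) (hy : ∀ t ∈ I, 0 < y t)
    (hsys : sp2System lam x y τ I) :
    ∀ t ∈ I,
      HasDerivAt (fun s => MV lam (x s) (y s) (τ s))
        ((y t ^ 2 + x t ^ 2 / 2) / (x t * y t ^ 2) * MV lam (x t) (y t) (τ t)
          - 3 * x t ^ 2 / y t ^ 2) t ∧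
      HasDerivAt (fun s => MV lam (x s) (y s) (τ s) / (x s * y s ^ 2))
        (-(3 * x t / y t ^ 4)) t := by
  intro t ht
  obtain ⟨h1, h2, h3⟩ := hsys t ht
  have hxt := hx t ht
  have hyt := hy t ht
  have hxne : x t ≠ 0 := ne_of_gt hxt
  have hyne : y t ≠ 0 := ne_of_gt hyt
  have hy2ne : y t ^ 2 ≠ 0 := pow_ne_zero _ hyne
  have hdenpos : (0:ℝ) < x t ^ 2 + 2 * y t ^ 2 := by positivity
  have hdenne : x t ^ 2 + 2 * y t ^ 2 ≠ 0 := ne_of_gt hdenpos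
  -- derivative of x itself
  have hx' : HasDerivAt x
      ((2 * x t - x t ^ 2 / y t ^ 2 * (x t + 2 * τ t)) / (2 * x t)) t := by
    have hsq : HasDerivAt (fun s => Real.sqrt (x s ^ 2))
        ((2 * x t - x t ^ 2 / y t ^ 2 * (x t + 2 * τ t)) / (2 * x t)) t := by
      have hs : HasDerivAt Real.sqrt (1 / (2 * Real.sqrt (x t ^ 2))) (x t ^ 2) := by
        apply Real.hasDerivAt_sqrt
        positivity
      have := hs.comp t h1
      have hxx : Real.sqrt (x t ^ 2) = x t := by
        rw [Real.sqrt_sq hxt.le]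
      rw [hxx] at this
      refine this.congr_deriv ?_
      ring
    apply hsq.congr_of_eventuallyEq
    filter_upwards [hIo.mem_nhds ht] with s hs
    rw [Real.sqrt_sq (hx s hs).le]
  -- derivative of M
  set Dx2 := 2 * x t - x t ^ 2 / y t ^ 2 * (x t + 2 * τ t) with hDx2
  set Dτ := 4 * (lam * x t * y t ^ 2 - 3 * τ t) *
          (y t ^ 2 - x t ^ 2 - 3 / 2 * x t * τ t) /
        (3 * x t * (x t ^ 2 + 2 * y t ^ 2)) with hDτ
  have hnum : HasDerivAt (fun s => 2 * x s ^ 2 * (lam * x s * y s ^ 2 - 3 * τ s))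
      (2 * Dx2 * (lam * x t * y t ^ 2 - 3 * τ t) +
        2 * x t ^ 2 * ((lam * (Dx2 / (2 * x t))) * y t ^ 2 +
          (lam * x t) * (x t + τ t) - 3 * Dτ)) t :=
    (h1.const_mul 2).mul (((hx'.const_mul lam).mul h2).sub (h3.const_mul 3))
  have hden : HasDerivAt (fun s => x s ^ 2 + 2 * y s ^ 2)
      (Dx2 + 2 * (x t + τ t)) t := h1.add (h2.const_mul 2)
  have hM : HasDerivAt (fun s => MV lam (x s) (y s) (τ s))
      ((y t ^ 2 + x t ^ 2 / 2) / (x t * y t ^ 2) * MV lam (x t) (y t) (τ t)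
        - 3 * x t ^ 2 / y t ^ 2) t := by
    have hfrac := hnum.div hden hdenne
    have := (hx'.const_mul 3).add hfrac
    refine this.congr_deriv ?_
    simp only [MV, tt1V, hDx2, hDτ]
    field_simp
    ring
  refine ⟨hM, ?_⟩
  -- derivative of x * y^2
  have hxy2 : HasDerivAt (fun s => x s * y s ^ 2) (y t ^ 2 + x t ^ 2 / 2) t := by
    have := hx'.mul h2
    refine this.congr_deriv ?_
    rw [hDx2]
    field_simp
    ring
  have hxy2ne : x t * y t ^ 2 ≠ 0 := mul_ne_zero hxne hy2ne
  have hq := hM.div hxy2 hxy2ne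
  refine hq.congr_deriv ?_
  simp only [MV, tt1V]
  field_simp
  ring

end aux

theorem stmt10 (lam : ℝ) (x y τ : ℝ → ℝ) (I : Set ℝ)
    (hIo : IsOpen I) (hIc : Convex ℝ I)
    (hx : ∀ t ∈ I, 0 < x t) (hy : ∀ t ∈ I, 0 < y t)
    (hsys : sp2System lam x y τ I) :
    (∀ t ∈ I,
      HasDerivAt (fun s => MV lam (x s) (y s) (τ s))
        ((y t ^ 2 + x t ^ 2 / 2) / (x t * y t ^ 2) * MV lam (x t) (y t) (τ t)
          - 3 * x t ^ 2 / y t ^ 2) t ∧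
      HasDerivAt (fun s => MV lam (x s) (y s) (τ s) / (x s * y s ^ 2))
        (-(3 * x t / y t ^ 4)) t) ∧
    StrictAntiOn (fun s => MV lam (x s) (y s) (τ s) / (x s * y s ^ 2)) I := by
  have key := aux_key lam x y τ I hIo hx hy hsys
  refine ⟨key, ?_⟩
  apply StrictAntiOn.mono ?_ (le_refl I)
  apply strictAntiOn_of_deriv_neg hIc
  · intro t ht
    exact ((key t ht).2.differentiableAt.continuousAt).continuousWithinAt
  · intro t ht
    rw [hIo.interior_eq] at ht
    rw [(key t ht).2.deriv]
    have := hx t ht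
    have := hy t ht
    have : (0:ℝ) < 3 * x t / y t ^ 4 := by positivity
    linarith
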